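/- Normalization of day addition: for every valid date D = (y, m, d) and every integer n, the small-step day-addition rules terminate; that is, there exists a unique valid date D' such that D +D n reduces in finitely many steps to D'. We write D +D n for this unique normal form. -/
import Mathlib


/-- A date is a triple of integers (year, month, day). -/
structure Date where
  y : ℤ
  m : ℤ
  d : ℤ

/-- A year is a leap year iff divisible by 4 and (not by 100, or by 400). -/
def isLeap (y : ℤ) : Prop :=
  y % 4 = 0 ∧ (y % 100 ≠ 0 ∨ y % 400 = 0)

/-- Number of days in month `m` of year `y`. -/
def nbdays (y m : ℤ) : ℤ :=
  if m = 4 ∨ m = 6 ∨ m = 9 ∨ m = 11 then 30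
  else if m = 2 then
    (if y % 4 = 0 ∧ (y % 100 ≠ 0 ∨ y % 400 = 0) then 29 else 28)
  else 31

/-- A date is valid iff `1 ≤ m ≤ 12` and `1 ≤ d ≤ nbdays y m`. -/
def Date.valid (D : Date) : Prop :=
  1 ≤ D.m ∧ D.m ≤ 12 ∧ 1 ≤ D.d ∧ D.d ≤ nbdays D.y D.m

/-- Month addition `(y, m, d) +m n`, with round-down of the day component. -/
def addMonths (D : Date) (n : ℤ) : Date :=
  ⟨D.y + (D.m - 1 + n) / 12,
   1 + (D.m - 1 + n) % 12,
   min D.d (nbdays (D.y + (D.m - 1 + n) / 12) (1 + (D.m - 1 + n) % 12))⟩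

/-- A configuration of the small-step day-addition machine:
either a pending addition `D +D n`, or a finished date. -/
inductive Conf where
  | pending (D : Date) (n : ℤ)
  | done (D : Date)

/-- Small-step rules for day addition `+D`. -/
inductive Step : Conf → Conf → Prop where
  | add_days {y m d n : ℤ}
      (h1 : 1 ≤ d + n) (h2 : d + n ≤ nbdays y m) :
      Step (Conf.pending ⟨y, m, d⟩ n) (Conf.done ⟨y, m, d + n⟩)
  | add_days_over {y m d n : ℤ}
      (h : d + n > nbdays y m) :
      Step (Conf.pending ⟨y, m, d⟩ n)
        (Conf.pending (addMonths ⟨y, m, 1⟩ 1) (n - (nbdays y m - d) - 1))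
  | add_days_under1 {y m d n : ℤ}
      (h1 : 1 < d) (h2 : d + n ≤ 0) :
      Step (Conf.pending ⟨y, m, d⟩ n) (Conf.pending ⟨y, m, 1⟩ (d - 1 + n))
  | add_days_under2 {y m n y' m' : ℤ}
      (h1 : 1 + n ≤ 0) (h2 : addMonths ⟨y, m, 1⟩ (-1) = ⟨y', m', 1⟩) :
      Step (Conf.pending ⟨y, m, 1⟩ n) (Conf.pending ⟨y', m', 1⟩ (n + nbdays y' m'))

/-- Reduction in finitely many steps. -/
def Reduces : Conf → Conf → Prop := Relation.ReflTransGen Step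

instance : Nonempty Date := ⟨⟨2000, 3, 1⟩⟩

/-- `addDays D n` is the unique valid normal form of `D +D n`
(when it exists; arbitrary otherwise). -/
noncomputable def addDays (D : Date) (n : ℤ) : Date :=
  Classical.epsilon fun D' : Date =>
    D'.valid ∧ Reduces (Conf.pending D n) (Conf.done D')

/-- Date-period addition `D +P (ny, nm, nd) = (D +m (12·ny + nm)) +D nd`. -/
noncomputable def addPeriod (D : Date) (P : ℤ × ℤ × ℤ) : Date :=
  addDays (addMonths D (12 * P.1 + P.2.1)) P.2.2

/-- Lexicographic order on dates. -/
def Date.le (a b : Date) : Prop :=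
  a.y < b.y ∨ (a.y = b.y ∧ a.m < b.m) ∨ (a.y = b.y ∧ a.m = b.m ∧ a.d ≤ b.d)

/-- Strict lexicographic order on dates. -/
def Date.lt (a b : Date) : Prop :=
  a.y < b.y ∨ (a.y = b.y ∧ a.m < b.m) ∨ (a.y = b.y ∧ a.m = b.m ∧ a.d < b.d)

/-- The epoch date: March 1, 2000. -/
def epoch : Date := ⟨2000, 3, 1⟩

/-- `toDelta D` is the unique integer `n` with `epoch +D n = D`
(when it exists; arbitrary otherwise). -/
noncomputable def toDelta (D : Date) : ℤ :=
  Classical.epsilon fun n : ℤ => addDays epoch n = D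

lemma nbdays_lb (y m : ℤ) : 28 ≤ nbdays y m := by
  unfold nbdays; split_ifs <;> norm_num

lemma nbdays_ub (y m : ℤ) : nbdays y m ≤ 31 := by
  unfold nbdays; split_ifs <;> norm_num

lemma addMonths_day_one (y m k : ℤ) :
    ∃ y' m', addMonths ⟨y, m, 1⟩ k = ⟨y', m', 1⟩ ∧ 1 ≤ m' ∧ m' ≤ 12 := by
  refine ⟨y + (m - 1 + k) / 12, 1 + (m - 1 + k) % 12, ?_, ?_, ?_⟩
  · have h := nbdays_lb (y + (m - 1 + k) / 12) (1 + (m - 1 + k) % 12)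
    simp only [addMonths]
    congr 1
    omega
  · have := Int.emod_nonneg (m - 1 + k) (by norm_num : (12 : ℤ) ≠ 0)
    omega
  · have := Int.emod_lt_of_pos (m - 1 + k) (by norm_num : (0 : ℤ) < 12)
    omega

lemma step_det {a b c : Conf} (h1 : Step a b) (h2 : Step a c) : b = c := by
  cases h1 with
  | add_days p1 p2 =>
    cases h2 with
    | add_days q1 q2 => rfl
    | add_days_over q => omega
    | add_days_under1 q1 q2 => omega
    | add_days_under2 q1 q2 => omega
  | @add_days_over y m d n p =>
    cases h2 with
    | add_days q1 q2 => omega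
    | add_days_over q => rfl
    | add_days_under1 q1 q2 =>
      have := nbdays_lb y m; omega
    | add_days_under2 q1 q2 =>
      have := nbdays_lb y m; omega
  | @add_days_under1 y m d n p1 p2 =>
    cases h2 with
    | add_days q1 q2 => omega
    | add_days_over q => have := nbdays_lb y m; omega
    | add_days_under1 q1 q2 => rfl
    | add_days_under2 q1 q2 => omega
  | @add_days_under2 y m n y1 m1 p1 p2 =>
    cases h2 with
    | add_days q1 q2 => omega
    | add_days_over q => have := nbdays_lb y m; omega
    | add_days_under1 q1 q2 => omega
    | @add_days_under2 _ _ _ y2 m2 q1 q2 =>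
      rw [p2] at q2
      injection q2 with e1 e2 e3
      subst e1; subst e2; rfl

lemma done_no_step {D : Date} {c : Conf} (h : Step (Conf.done D) c) : False := by
  cases h

lemma reduces_done_unique {c : Conf} {D1 D2 : Date}
    (h1 : Reduces c (Conf.done D1)) (h2 : Reduces c (Conf.done D2)) : D1 = D2 := by
  induction h1 using Relation.ReflTransGen.head_induction_on with
  | refl =>
    rcases Relation.ReflTransGen.cases_head h2 with h | ⟨c', hs, _⟩
    · injection h
    · exact absurd hs done_no_step
  | head hs _ ih =>
    rcases Relation.ReflTransGen.cases_head h2 with h | ⟨c', hs', hr'⟩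
    · subst h; exact absurd hs done_no_step
    · rw [step_det hs hs'] at *
      exact ih hr'

lemma exists_nf : ∀ k : ℕ, ∀ y m d n : ℤ, n.natAbs ≤ k → (Date.mk y m d).valid →
    ∃ D' : Date, D'.valid ∧ Reduces (Conf.pending ⟨y, m, d⟩ n) (Conf.done D') := by
  intro k
  induction k using Nat.strong_induction_on with
  | _ k ih =>
    intro y m d n hk hD
    obtain ⟨hm1, hm2, hd1, hd2⟩ := hD
    simp only at hm1 hm2 hd1 hd2
    have hnb := nbdays_lb y m
    by_cases hc1 : 1 ≤ d + n ∧ d + n ≤ nbdays y m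
    · exact ⟨⟨y, m, d + n⟩, ⟨hm1, hm2, hc1.1, hc1.2⟩,
        Relation.ReflTransGen.single (Step.add_days hc1.1 hc1.2)⟩
    by_cases hc2 : d + n > nbdays y m
    · -- overflow case
      obtain ⟨y', m', heq, hm'1, hm'2⟩ := addMonths_day_one y m 1
      have hval : (Date.mk y' m' 1).valid :=
        ⟨hm'1, hm'2, le_refl 1, le_trans (by norm_num) (nbdays_lb y' m')⟩
      have hn' : (n - (nbdays y m - d) - 1).natAbs < n.natAbs := by omega
      have hk' : n.natAbs - 1 < k := by omega
      obtain ⟨D', hv', hr'⟩ := ih (n.natAbs - 1) hk' y' m' 1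
        (n - (nbdays y m - d) - 1) (by omega) hval
      refine ⟨D', hv', Relation.ReflTransGen.head (Step.add_days_over hc2) ?_⟩
      rw [heq]; exact hr'
    -- now d + n ≤ 0
    have hc3 : d + n ≤ 0 := by omega
    by_cases hd : 1 < d
    · have hk' : (d - 1 + n).natAbs < n.natAbs := by omega
      obtain ⟨D', hv', hr'⟩ := ih ((d - 1 + n).natAbs) (by omega) y m 1 (d - 1 + n)
        (le_refl _) ⟨hm1, hm2, le_refl 1, le_trans (by norm_num) hnb⟩
      exact ⟨D', hv', Relation.ReflTransGen.head (Step.add_days_under1 hd hc3) hr'⟩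
    · have hd1' : d = 1 := by omega
      subst hd1'
      obtain ⟨y', m', heq, hm'1, hm'2⟩ := addMonths_day_one y m (-1)
      have hnb' := nbdays_lb y' m'
      by_cases hpos : 0 ≤ n + nbdays y' m'
      · -- one under2 step then add_days
        refine ⟨⟨y', m', 1 + (n + nbdays y' m')⟩,
          ⟨hm'1, hm'2, by simp only; omega, by simp only; omega⟩, ?_⟩
        exact Relation.ReflTransGen.head (Step.add_days_under2 (by omega) heq)
          (Relation.ReflTransGen.single (Step.add_days (by omega) (by omega)))
      · have hk' : (n + nbdays y' m').natAbs < n.natAbs := by omega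
        obtain ⟨D', hv', hr'⟩ := ih ((n + nbdays y' m').natAbs) (by omega) y' m' 1
          (n + nbdays y' m') (le_refl _) ⟨hm'1, hm'2, le_refl 1, le_trans (by norm_num) hnb'⟩
        exact ⟨D', hv',
          Relation.ReflTransGen.head (Step.add_days_under2 (by omega) heq) hr'⟩

/-- **Normalization of day addition**: for every valid date `D` and every integer `n`,
the small-step day-addition rules terminate: there exists a unique valid date `D'` such
that `D +D n` reduces in finitely many steps to `D'`. -/
theorem dayAddition_normalization (D : Date) (hD : D.valid) (n : ℤ) :
    ∃! D' : Date, D'.valid ∧ Reduces (Conf.pending D n) (Conf.done D') := by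
  obtain ⟨y, m, d⟩ := D
  obtain ⟨D', hv, hr⟩ := exists_nf n.natAbs y m d n (le_refl _) hD
  exact ⟨D', ⟨hv, hr⟩, fun E ⟨_, hrE⟩ => reduces_done_unique hrE hr⟩
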